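/- The circulant graph Cay(ℤ₁₆, {1, 7, 9, 15}) does not admit pretty good state transfer between vertices 0 and 8. -/

import Mathlib

open Matrix Complex Filter Topology

attribute [local instance] Matrix.linftyOpNormedRing Matrix.linftyOpNormedAlgebra

/-- Adjacency matrix of the circulant graph `Cay(ℤ_n, S)`. -/
noncomputable def circAdj (n : ℕ) [NeZero n] (S : Finset (ZMod n)) :
    Matrix (ZMod n) (ZMod n) ℂ :=
  Matrix.of fun a b => if a - b ∈ S then (1 : ℂ) else 0

/-- Transition matrix `H(t) = exp(-itA)`. -/
noncomputable def transM {n : ℕ} [NeZero n] (A : Matrix (ZMod n) (ZMod n) ℂ) (t : ℝ) :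
    Matrix (ZMod n) (ZMod n) ℂ :=
  NormedSpace.exp ((-(t : ℂ) * Complex.I) • A)

/-- The standard basis vector `e_u` of `ℂ^{ℤ_n}`. -/
def eVec {n : ℕ} [NeZero n] (u : ZMod n) : ZMod n → ℂ := Pi.single u 1

namespace NoPgstAux

/-- The character vector `j ↦ ζ^(j.val)` on `ZMod 16`. -/
noncomputable def w (ζ : ℂ) (j : ZMod 16) : ℂ := ζ ^ j.val

lemma pow_mod_eq {ζ : ℂ} (h : ζ ^ 16 = 1) (m : ℕ) : ζ ^ (m % 16) = ζ ^ m := by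
  conv_rhs => rw [← Nat.div_add_mod m 16]
  rw [pow_add, pow_mul, h, one_pow, one_mul]

lemma w_add {ζ : ℂ} (h : ζ ^ 16 = 1) (x y : ZMod 16) :
    w ζ (x + y) = w ζ x * w ζ y := by
  simp only [w, ZMod.val_add, pow_mod_eq h, pow_add]

lemma vecMul_circAdj {ζ : ℂ} (h16 : ζ ^ 16 = 1)
    (hsum : ζ + ζ ^ 7 + ζ ^ 9 + ζ ^ 15 = 0) :
    w ζ ᵥ* circAdj 16 ({1, 7, 9, 15} : Finset (ZMod 16)) = 0 := by
  funext b
  have hre : ∀ f : ZMod 16 → ℂ, ∑ a : ZMod 16, f a = ∑ a : ZMod 16, f (a + b) :=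
    fun f => (Fintype.sum_equiv (Equiv.addRight b) _ _ (fun a => rfl)).symm
  show w ζ ⬝ᵥ (fun a => circAdj 16 _ a b) = 0
  simp only [circAdj, dotProduct, Matrix.of_apply]
  rw [hre (fun a => w ζ a * if a - b ∈ ({1, 7, 9, 15} : Finset (ZMod 16)) then (1:ℂ) else 0)]
  simp only [add_sub_cancel_right]
  have hexp : ∀ a : ZMod 16,
      (w ζ (a + b) * if a ∈ ({1, 7, 9, 15} : Finset (ZMod 16)) then (1:ℂ) else 0)
        = (if a ∈ ({1, 7, 9, 15} : Finset (ZMod 16)) then w ζ a * w ζ b else 0) := by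
    intro a
    by_cases ha : a ∈ ({1, 7, 9, 15} : Finset (ZMod 16)) <;>
      simp [ha, w_add h16, mul_comm]
  rw [Finset.sum_congr rfl (fun a _ => hexp a), Finset.sum_ite_mem, Finset.univ_inter]
  have h1 : w ζ (1 : ZMod 16) = ζ := by
    rw [w, show ((1 : ZMod 16)).val = 1 from rfl, pow_one]
  have h7 : w ζ (7 : ZMod 16) = ζ ^ 7 := by
    rw [w, show ((7 : ZMod 16)).val = 7 from rfl]
  have h9 : w ζ (9 : ZMod 16) = ζ ^ 9 := by
    rw [w, show ((9 : ZMod 16)).val = 9 from rfl]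
  have h15 : w ζ (15 : ZMod 16) = ζ ^ 15 := by
    rw [w, show ((15 : ZMod 16)).val = 15 from rfl]
  rw [show ({1, 7, 9, 15} : Finset (ZMod 16)) = {1, 7, 9, 15} from rfl]
  rw [Finset.sum_insert (by decide), Finset.sum_insert (by decide),
    Finset.sum_insert (by decide), Finset.sum_singleton]
  rw [h1, h7, h9, h15]
  ring_nf
  rw [show ζ * w ζ b + ζ ^ 7 * w ζ b + ζ ^ 9 * w ζ b + ζ ^ 15 * w ζ b
      = (ζ + ζ ^ 7 + ζ ^ 9 + ζ ^ 15) * w ζ b from by ring, hsum, zero_mul]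

/-- `vecMul` by a fixed vector, as a linear map in the matrix. -/
noncomputable def vecMulLM (v : ZMod 16 → ℂ) :
    Matrix (ZMod 16) (ZMod 16) ℂ →ₗ[ℂ] (ZMod 16 → ℂ) where
  toFun M := v ᵥ* M
  map_add' M N := Matrix.vecMul_add M N v
  map_smul' c M := by
    funext j
    simp [Matrix.vecMul, dotProduct, Finset.mul_sum, mul_left_comm]

lemma vecMul_exp {v : ZMod 16 → ℂ} {B : Matrix (ZMod 16) (ZMod 16) ℂ}
    (h : v ᵥ* B = 0) : v ᵥ* NormedSpace.exp B = v := by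
  have hpow : ∀ n : ℕ, n ≠ 0 → v ᵥ* (B ^ n) = 0 := by
    intro n hn
    obtain ⟨m, rfl⟩ := Nat.exists_eq_succ_of_ne_zero hn
    rw [pow_succ', ← Matrix.vecMul_vecMul, h, Matrix.zero_vecMul]
  have hs : Summable fun n : ℕ => (((n.factorial : ℕ) : ℂ)⁻¹) • B ^ n :=
    NormedSpace.expSeries_summable' (𝕂 := ℂ) B
  calc v ᵥ* NormedSpace.exp B
      = (vecMulLM v).toContinuousLinearMap (∑' (n : ℕ), (((n.factorial : ℕ) : ℂ)⁻¹) • B ^ n) := by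
        rw [NormedSpace.exp_eq_tsum (𝕂 := ℂ)]; rfl
    _ = ∑' (n : ℕ), (vecMulLM v).toContinuousLinearMap ((((n.factorial : ℕ) : ℂ)⁻¹) • B ^ n) :=
        ContinuousLinearMap.map_tsum _ hs
    _ = v := by
        have hL : ∀ M : Matrix (ZMod 16) (ZMod 16) ℂ,
            (vecMulLM v).toContinuousLinearMap M = v ᵥ* M := fun _ => rfl
        rw [tsum_eq_single 0]
        · rw [hL]
          simp [Matrix.vecMul_smul, Matrix.vecMul_one]
        · intro n hn
          rw [_root_.map_smul, hL, hpow n hn, smul_zero]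

/-- Dot product against a fixed vector, as a linear map. -/
noncomputable def dotLM (v : ZMod 16 → ℂ) : (ZMod 16 → ℂ) →ₗ[ℂ] ℂ where
  toFun x := v ⬝ᵥ x
  map_add' x y := dotProduct_add v x y
  map_smul' c x := by simp [dotProduct, Finset.mul_sum, mul_left_comm]

lemma key {ζ : ℂ} (h16 : ζ ^ 16 = 1)
    (hsum : ζ + ζ ^ 7 + ζ ^ 9 + ζ ^ 15 = 0)
    {t : ℕ → ℝ} {γ : ℂ}
    (htend : Tendsto
      (fun m => transM (circAdj 16 ({1, 7, 9, 15} : Finset (ZMod 16))) (t m) *ᵥ eVec 0)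
      atTop (nhds (γ • eVec (8 : ZMod 16)))) :
    γ * ζ ^ 8 = 1 := by
  set A := circAdj 16 ({1, 7, 9, 15} : Finset (ZMod 16)) with hA
  have hvA : w ζ ᵥ* A = 0 := vecMul_circAdj h16 hsum
  have hφcont : Continuous (dotLM (w ζ)) := (dotLM (w ζ)).continuous_of_finiteDimensional
  have h1 : Tendsto (fun m => dotLM (w ζ) (transM A (t m) *ᵥ eVec 0)) atTop
      (nhds (dotLM (w ζ) (γ • eVec (8 : ZMod 16)))) :=
    (hφcont.tendsto _).comp htend
  have h2 : ∀ m, dotLM (w ζ) (transM A (t m) *ᵥ eVec 0) = 1 := by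
    intro m
    have hB : w ζ ᵥ* ((-(t m : ℂ) * Complex.I) • A) = 0 := by
      funext j
      simp only [Matrix.vecMul, dotProduct, Matrix.smul_apply, smul_eq_mul]
      have := congrFun hvA j
      simp only [Matrix.vecMul, dotProduct, Pi.zero_apply] at this
      rw [show ∑ i, w ζ i * ((-(t m : ℂ) * Complex.I) * A i j)
          = (-(t m : ℂ) * Complex.I) * ∑ i, w ζ i * A i j from by
            rw [Finset.mul_sum]; exact Finset.sum_congr rfl fun i _ => by ring,
        this, mul_zero]
      rfl
    show w ζ ⬝ᵥ (transM A (t m) *ᵥ eVec 0) = 1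
    rw [dotProduct_mulVec, transM, vecMul_exp hB]
    simp [eVec, dotProduct, Pi.single_apply, w]
  have h8 : w ζ ⬝ᵥ eVec (8 : ZMod 16) = ζ ^ 8 := by
    simp [eVec, dotProduct, Pi.single_apply, w, show ((8 : ZMod 16)).val = 8 from rfl]
  have h3 : dotLM (w ζ) (γ • eVec (8 : ZMod 16)) = γ * ζ ^ 8 := by
    show w ζ ⬝ᵥ (γ • eVec (8 : ZMod 16)) = γ * ζ ^ 8
    rw [dotProduct_smul, smul_eq_mul, h8]
  have h4 : Tendsto (fun _ : ℕ => (1 : ℂ)) atTop (nhds (γ * ζ ^ 8)) := by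
    rw [← h3]
    simpa [h2] using h1
  exact tendsto_nhds_unique h4 tendsto_const_nhds

end NoPgstAux

/-- `Cay(ℤ₁₆, {1,7,9,15})` has no pretty good state transfer from `0` to `8`. -/
theorem no_pgst_example :
    ¬ ∃ (t : ℕ → ℝ) (γ : ℂ), ‖γ‖ = 1 ∧
      Tendsto
        (fun m => transM (circAdj 16 ({1, 7, 9, 15} : Finset (ZMod 16))) (t m) *ᵥ eVec 0)
        atTop (nhds (γ • eVec (8 : ZMod 16))) := by
  rintro ⟨t, γ, hγ, htend⟩
  -- Use the eigenvector for ζ = I (the `l = 4` character).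
  have hI16 : (Complex.I) ^ 16 = 1 := by
    have h2 : (Complex.I) ^ 2 = -1 := Complex.I_sq
    linear_combination (Complex.I^14 - Complex.I^12 + Complex.I^10 - Complex.I^8 + Complex.I^6 - Complex.I^4 + Complex.I^2 - 1) * h2
  have hIsum : Complex.I + Complex.I ^ 7 + Complex.I ^ 9 + Complex.I ^ 15 = 0 := by
    have h2 : (Complex.I) ^ 2 = -1 := Complex.I_sq
    linear_combination (Complex.I * (Complex.I^4 - Complex.I^2 + 1) * (Complex.I^8 + 1)) * h2
  have hkeyI := NoPgstAux.key hI16 hIsum htend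
  have hI8 : (Complex.I) ^ 8 = 1 := by
    have h2 : (Complex.I) ^ 2 = -1 := Complex.I_sq
    linear_combination (Complex.I^6 - Complex.I^4 + Complex.I^2 - 1) * h2
  rw [hI8, mul_one] at hkeyI
  -- Use the eigenvector for ζ = exp(πI/8) (the `l = 1` character).
  set ω : ℂ := Complex.exp (Real.pi * Complex.I / 8) with hω
  have hω8 : ω ^ 8 = -1 := by
    rw [hω, ← Complex.exp_nat_mul]
    rw [show (8 : ℕ) * ((Real.pi : ℂ) * Complex.I / 8) = Real.pi * Complex.I from by
      push_cast; ring]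
    exact Complex.exp_pi_mul_I
  have hω16 : ω ^ 16 = 1 := by
    rw [show (16 : ℕ) = 8 * 2 from rfl, pow_mul, hω8]; norm_num
  have hωsum : ω + ω ^ 7 + ω ^ 9 + ω ^ 15 = 0 := by
    linear_combination (ω + ω ^ 7) * hω8
  have hkeyω := NoPgstAux.key hω16 hωsum htend
  rw [hω8] at hkeyω
  rw [hkeyI] at hkeyω
  norm_num at hkeyω
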